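/- For every continuous function F : ([0,1]^d)^T → ℝ and every ε > 0 there exist an integer D ≥ 1, subsets S_1,…,S_D ⊆ {1,…,T} with |S_i| ≥ T/4, continuous functions f̃_1,…,f̃_D : [0,1]^d → [0,1], and a continuous function F̃₀ : [0,1]^D → ℝ such that max over X = (x(1),…,x(T)) ∈ ([0,1]^d)^T of |F(X) − F̃₀(min_{t∈S_1} f̃_1(x(t)), …, min_{t∈S_D} f̃_D(x(t)))| ≤ ε. -/

import Mathlib

open Set

/-- The cube `[0,1]^n` inside `Fin n → ℝ`. -/
def cube (n : ℕ) : Set (Fin n → ℝ) := {x | ∀ i, x i ∈ Icc (0 : ℝ) 1}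

/-- The input space `([0,1]^d)^T` of sequences of length `T` of points in `[0,1]^d`. -/
def seqCube (d T : ℕ) : Set (Fin T → Fin d → ℝ) := {X | ∀ t, X t ∈ cube d}

/-- Predicate: `g` is exactly representable in the relaxed retrieval form. -/
def Good (d T : ℕ) (g : (Fin T → Fin d → ℝ) → ℝ) : Prop :=
  ∃ D : ℕ, 1 ≤ D ∧
    ∃ (S : Fin D → Finset (Fin T)) (hS : ∀ i, (S i).Nonempty)
      (f : Fin D → (Fin d → ℝ) → ℝ) (F₀ : (Fin D → ℝ) → ℝ),
      (∀ i, (T : ℝ) / 4 ≤ ((S i).card : ℝ)) ∧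
      (∀ i, Continuous (f i)) ∧
      (∀ i x, f i x ∈ Icc (0 : ℝ) 1) ∧
      Continuous F₀ ∧
      (∀ X, g X = F₀ (fun i => (S i).inf' (hS i) (fun t => f i (X t))))

lemma good_const (d T : ℕ) (hT : 1 ≤ T) (c : ℝ) : Good d T (fun _ => c) := by
  haveI : Nonempty (Fin T) := ⟨⟨0, hT⟩⟩
  refine ⟨1, le_refl 1, fun _ => Finset.univ, fun _ => Finset.univ_nonempty, fun _ _ => 0,
    fun _ => c, fun _ => ?_, fun _ => continuous_const, fun _ _ => ⟨le_refl 0, zero_le_one⟩,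
    continuous_const, fun _ => rfl⟩
  · simp only [Finset.card_univ, Fintype.card_fin]
    have : (0:ℝ) ≤ (T:ℝ) := Nat.cast_nonneg T
    linarith

lemma good_comb (d T : ℕ) {g h : (Fin T → Fin d → ℝ) → ℝ}
    (op : ℝ → ℝ → ℝ) (hop : Continuous fun z : ℝ × ℝ => op z.1 z.2)
    (hg : Good d T g) (hh : Good d T h) : Good d T (fun X => op (g X) (h X)) := by
  obtain ⟨D₁, hD₁, S₁, hS₁, f₁, F₁, hc₁, hf₁, hb₁, hF₁, he₁⟩ := hg
  obtain ⟨D₂, hD₂, S₂, hS₂, f₂, F₂, hc₂, hf₂, hb₂, hF₂, he₂⟩ := hh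
  refine ⟨D₁ + D₂, by omega,
    Fin.addCases S₁ S₂, ?_, Fin.addCases f₁ f₂,
    fun z => op (F₁ fun i => z (Fin.castAdd D₂ i)) (F₂ fun j => z (Fin.natAdd D₁ j)),
    ?_, ?_, ?_, ?_, ?_⟩
  · intro i
    refine Fin.addCases (fun j => ?_) (fun j => ?_) i
    · simpa using hS₁ j
    · simpa using hS₂ j
  · intro i
    refine Fin.addCases (fun j => ?_) (fun j => ?_) i
    · simpa using hc₁ j
    · simpa using hc₂ j
  · intro i
    refine Fin.addCases (fun j => ?_) (fun j => ?_) i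
    · simpa using hf₁ j
    · simpa using hf₂ j
  · intro i x
    refine Fin.addCases (fun j => ?_) (fun j => ?_) i
    · simpa using hb₁ j x
    · simpa using hb₂ j x
  · exact hop.comp ((hF₁.comp (continuous_pi fun i => continuous_apply _)).prodMk
      (hF₂.comp (continuous_pi fun j => continuous_apply _)))
  · intro X
    have h1 : ∀ i : Fin D₁,
        ((Fin.addCases S₁ S₂ (Fin.castAdd D₂ i) : Finset (Fin T)).inf'
          (by simp [hS₁ i]) fun t => Fin.addCases f₁ f₂ (Fin.castAdd D₂ i) (X t))
          = (S₁ i).inf' (hS₁ i) (fun t => f₁ i (X t)) := by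
      intro i; simp
    have h2 : ∀ i : Fin D₂,
        ((Fin.addCases S₁ S₂ (Fin.natAdd D₁ i) : Finset (Fin T)).inf'
          (by simp [hS₂ i]) fun t => Fin.addCases f₁ f₂ (Fin.natAdd D₁ i) (X t))
          = (S₂ i).inf' (hS₂ i) (fun t => f₂ i (X t)) := by
      intro i; simp
    dsimp only
    rw [he₁ X, he₂ X]
    exact congrArg₂ op (congrArg F₁ (funext fun i => (h1 i).symm))
      (congrArg F₂ (funext fun i => (h2 i).symm))

lemma seqCube_compact (d T : ℕ) : IsCompact (seqCube d T) := by
  have hc : IsCompact (cube d) := by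
    have : cube d = Set.pi Set.univ (fun _ : Fin d => Icc (0:ℝ) 1) := by
      ext x; simp [cube, Set.mem_pi, Pi.le_def, forall_and]
    rw [this]
    exact isCompact_univ_pi (fun _ => isCompact_Icc)
  have : seqCube d T = Set.pi Set.univ (fun _ : Fin T => cube d) := by
    ext X; simp [seqCube, Set.mem_pi]
  rw [this]
  exact isCompact_univ_pi (fun _ => hc)

/-- Key separation construction: a single min-pooled feature distinguishing two sequences. -/
lemma good_sep (d T : ℕ) (hT : 1 ≤ T) (m : ℕ) (hm : T = 4 * m)
    (S : Finset (Fin T)) (hS : S.Nonempty) (hcard : m ≤ S.card)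
    (u v : Fin T → Fin d → ℝ) (p : Fin d → ℝ)
    (hu : ∃ s ∈ S, u s = p) (hv : ∀ s ∈ S, v s ≠ p) :
    ∃ g : (Fin T → Fin d → ℝ) → ℝ, Good d T g ∧ g u = 0 ∧ g v = 1 := by
  classical
  set δ : ℝ := S.inf' hS (fun s => dist (v s) p) with hδ
  have hδpos : 0 < δ := by
    rw [hδ, Finset.lt_inf'_iff]
    intro s hs
    exact dist_pos.2 (hv s hs)
  set c : ℝ := 1 / δ with hc
  have hcpos : 0 < c := by positivity
  set f : (Fin d → ℝ) → ℝ := fun z => min 1 (c * dist z p) with hf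
  refine ⟨fun X => S.inf' hS (fun t => f (X t)), ⟨1, le_refl 1, fun _ => S, fun _ => hS,
    fun _ => f, fun z => z 0, ?_, ?_, ?_, continuous_apply 0, fun X => rfl⟩, ?_, ?_⟩
  · intro _
    have : ((m:ℝ)) ≤ (S.card : ℝ) := by exact_mod_cast hcard
    have : ((T:ℝ)) = 4 * m := by exact_mod_cast hm
    rw [this]; linarith [show ((m:ℝ)) ≤ (S.card:ℝ) from by exact_mod_cast hcard]
  · intro _
    exact continuous_const.min (continuous_const.mul (continuous_id.dist continuous_const))
  · intro _ z
    constructor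
    · have : 0 ≤ c * dist z p := by positivity
      simp [hf]; positivity
    · exact min_le_left _ _
  · -- value at u is 0
    apply le_antisymm
    · obtain ⟨s, hs, hus⟩ := hu
      refine Finset.inf'_le_of_le _ hs ?_
      simp [hf, hus]
    · refine Finset.le_inf' _ _ (fun s _ => ?_)
      have : 0 ≤ c * dist (u s) p := by positivity
      simp [hf]; positivity
  · -- value at v is 1
    have : ∀ s ∈ S, f (v s) = 1 := by
      intro s hs
      have hds : δ ≤ dist (v s) p := Finset.inf'_le _ hs
      have : (1:ℝ) ≤ c * dist (v s) p := by
        rw [hc]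
        rw [div_mul_eq_mul_div, le_div_iff₀ hδpos]
        linarith
      simp [hf, min_eq_left this]
    calc S.inf' hS (fun t => f (v t)) = S.inf' hS (fun _ => (1:ℝ)) :=
          Finset.inf'_congr hS rfl (fun s hs => this s hs)
      _ = 1 := Finset.inf'_const _ _

theorem density_of_relaxed_retrieval_class (d T : ℕ) (hd : 1 ≤ d) (hT : 1 ≤ T)
    (hdvd : 4 ∣ T)
    (F : (Fin T → Fin d → ℝ) → ℝ) (hF : ContinuousOn F (seqCube d T))
    (ε : ℝ) (hε : 0 < ε) :
    ∃ D : ℕ, 1 ≤ D ∧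
      ∃ (S : Fin D → Finset (Fin T)) (hS : ∀ i, (S i).Nonempty)
        (f : Fin D → (Fin d → ℝ) → ℝ) (F₀ : (Fin D → ℝ) → ℝ),
        (∀ i, (T : ℝ) / 4 ≤ ((S i).card : ℝ)) ∧
        (∀ i, ContinuousOn (f i) (cube d)) ∧
        (∀ i, ∀ x ∈ cube d, f i x ∈ Icc (0 : ℝ) 1) ∧
        ContinuousOn F₀ (cube D) ∧
        (∀ X ∈ seqCube d T,
          |F X - F₀ (fun i => (S i).inf' (hS i) (fun t => f i (X t)))| ≤ ε) := by
  classical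
  obtain ⟨m, hm⟩ := hdvd
  have hm1 : 1 ≤ m := by omega
  haveI : CompactSpace ↥(seqCube d T) := isCompact_iff_compactSpace.1 (seqCube_compact d T)
  -- the subalgebra of representable functions
  let A : Subalgebra ℝ C(↥(seqCube d T), ℝ) :=
  { carrier := {φ | ∃ g, Good d T g ∧ ∀ X : ↥(seqCube d T), φ X = g X.1}
    mul_mem' := by
      rintro φ ψ ⟨g, hg, heg⟩ ⟨h, hh, heh⟩
      exact ⟨fun X => g X * h X,
        good_comb d T (fun a b => a * b) (continuous_fst.mul continuous_snd) hg hh,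
        fun X => by simp [heg X, heh X]⟩
    add_mem' := by
      rintro φ ψ ⟨g, hg, heg⟩ ⟨h, hh, heh⟩
      exact ⟨fun X => g X + h X,
        good_comb d T (fun a b => a + b) (continuous_fst.add continuous_snd) hg hh,
        fun X => by simp [heg X, heh X]⟩
    algebraMap_mem' := fun c => ⟨fun _ => c, good_const d T hT c, fun _ => rfl⟩ }
  -- A separates points
  have hsep : A.SeparatesPoints := by
    intro X Y hXY
    have hne : X.1 ≠ Y.1 := fun h => hXY (Subtype.ext h)
    obtain ⟨t₀, ht₀⟩ : ∃ t, X.1 t ≠ Y.1 t := by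
      by_contra hcon
      push_neg at hcon
      exact hne (funext hcon)
    set p := X.1 t₀
    set q := Y.1 t₀
    set B : Finset (Fin T) := Finset.univ.filter (fun s => Y.1 s = p) with hB
    set Aset : Finset (Fin T) := Finset.univ.filter (fun s => X.1 s = q) with hA
    have hcardB : B.card + Bᶜ.card = T := by
      rw [Finset.card_add_card_compl]; simp
    have hcardA : Aset.card + Asetᶜ.card = T := by
      rw [Finset.card_add_card_compl]; simp
    have key : ∃ g : (Fin T → Fin d → ℝ) → ℝ, Good d T g ∧ g X.1 ≠ g Y.1 := by
      by_cases h1 : m ≤ Bᶜ.card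
      · -- use S = Bᶜ, point p: X hits p at t₀, Y avoids p on Bᶜ
        have ht₀B : t₀ ∈ Bᶜ := by
          simp [hB, Finset.mem_compl]
          exact fun h => ht₀ h.symm
        obtain ⟨g, hg, hg0, hg1⟩ := good_sep d T hT m hm Bᶜ ⟨t₀, ht₀B⟩ h1 X.1 Y.1 p
          ⟨t₀, ht₀B, rfl⟩ (fun s hs => by simpa [hB, Finset.mem_compl] using hs)
        exact ⟨g, hg, by rw [hg0, hg1]; norm_num⟩
      · by_cases h2 : m ≤ Asetᶜ.card
        · have ht₀A : t₀ ∈ Asetᶜ := by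
            simp [hA, Finset.mem_compl]
            exact fun h => ht₀ h
          obtain ⟨g, hg, hg0, hg1⟩ := good_sep d T hT m hm Asetᶜ ⟨t₀, ht₀A⟩ h2 Y.1 X.1 q
            ⟨t₀, ht₀A, rfl⟩ (fun s hs => by simpa [hA, Finset.mem_compl] using hs)
          exact ⟨g, hg, by rw [hg0, hg1]; norm_num⟩
        · -- S = Aset ∩ B: Y = p on S, X = q ≠ p on S
          push_neg at h1 h2
          have hcap : m ≤ (Aset ∩ B).card := by
            have : (Aset ∩ B)ᶜ = Asetᶜ ∪ Bᶜ := by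
              rw [Finset.compl_inter]
            have hle : (Aset ∩ B)ᶜ.card ≤ Asetᶜ.card + Bᶜ.card :=
              this ▸ Finset.card_union_le _ _
            have := Finset.card_add_card_compl (Aset ∩ B)
            simp only [Fintype.card_fin] at this
            omega
          have hSne : (Aset ∩ B).Nonempty := by
            rw [← Finset.card_pos]; omega
          have hpq : q ≠ p := fun h => ht₀ h.symm
          obtain ⟨g, hg, hg0, hg1⟩ := good_sep d T hT m hm (Aset ∩ B) hSne hcap Y.1 X.1 p
            ⟨hSne.choose, hSne.choose_spec, by
              have := hSne.choose_spec
              simp [hB, Finset.mem_inter] at this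
              exact this.2⟩
            (fun s hs => by
              have : X.1 s = q := by
                simp [hA, Finset.mem_inter] at hs
                exact hs.1
              rw [this]; exact hpq)
          exact ⟨g, hg, by rw [hg0, hg1]; norm_num⟩
    obtain ⟨g, hg, hgne⟩ := key
    refine ⟨_, ⟨⟨fun Z => g Z.1, ?_⟩, ⟨g, hg, fun _ => rfl⟩, rfl⟩, hgne⟩
    · obtain ⟨D, _, S, hS, f, F₀, _, hf, _, hF₀, he⟩ := hg
      have : Continuous fun Z : ↥(seqCube d T) => g Z.1 := by
        have : (fun Z : ↥(seqCube d T) => g Z.1)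
            = fun Z => F₀ (fun i => (S i).inf' (hS i) (fun t => f i (Z.1 t))) := by
          funext Z; exact he Z.1
        rw [this]
        refine hF₀.comp (continuous_pi fun i => ?_)
        have : Continuous fun Z : ↥(seqCube d T) => fun t => f i (Z.1 t) :=
          continuous_pi fun t => (hf i).comp ((continuous_apply t).comp continuous_subtype_val)
        exact Continuous.finset_inf'_apply (hS i) (fun t _ => (hf i).comp
          ((continuous_apply t).comp continuous_subtype_val))
      exact this
  -- Stone–Weierstrass
  set φF : C(↥(seqCube d T), ℝ) := ⟨fun Z => F Z.1, hF.restrict⟩ with hφF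
  obtain ⟨⟨ψ, hψA⟩, hψ⟩ :=
    ContinuousMap.exists_mem_subalgebra_near_continuousMap_of_separatesPoints A hsep φF ε hε
  obtain ⟨g, hg, heg⟩ := hψA
  obtain ⟨D, hD, S, hS, f, F₀, hcard, hf, hb, hF₀, he⟩ := hg
  refine ⟨D, hD, S, hS, f, F₀, hcard, fun i => (hf i).continuousOn,
    fun i x _ => hb i x, hF₀.continuousOn, ?_⟩
  intro X hX
  have := ContinuousMap.norm_coe_le_norm (ψ - φF) ⟨X, hX⟩
  rw [← he X]
  have hval : ψ ⟨X, hX⟩ = g X := heg ⟨X, hX⟩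
  have : |F X - g X| ≤ ‖ψ - φF‖ := by
    calc |F X - g X| = |ψ ⟨X, hX⟩ - φF ⟨X, hX⟩| := by
          rw [hval]; show |F X - g X| = |g X - F X|; exact abs_sub_comm _ _
      _ = ‖(ψ - φF) ⟨X, hX⟩‖ := by simp [Real.norm_eq_abs]
      _ ≤ ‖ψ - φF‖ := ContinuousMap.norm_coe_le_norm _ _
  linarith [this, le_of_lt hψ]
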